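/- If P and Q are quasi-identity n×n matrices over the extended tropical semifield D(ℝ), then the diagonal entries of PQ are not all ghosts: there exists an index i with (PQ)_{ii} ∉ G₀. -/

import Mathlib

noncomputable section

/-- The extended tropical semifield `D(ℝ)`: `bot` is `-∞`; `nb g r` is the element of
underlying value `r : ℝ`, ghost if `g = true`, tangible if `g = false`. -/
inductive DR : Type where
  | bot : DR
  | nb : Bool → ℝ → DR

namespace DR

/-- Supertropical addition on `D(ℝ)`. -/
def add : DR → DR → DR
  | bot, y => y
  | x, bot => x
  | nb b r, nb c s => if r < s then nb c s else if s < r then nb b r else nb true r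

/-- Supertropical multiplication on `D(ℝ)`. -/
def mul : DR → DR → DR
  | bot, _ => bot
  | _, bot => bot
  | nb b r, nb c s => nb (b || c) (r + s)

theorem bot_add (x : DR) : add bot x = x := by cases x <;> rfl

theorem add_bot (x : DR) : add x bot = x := by cases x <;> rfl

theorem bot_mul (x : DR) : mul bot x = bot := by cases x <;> rfl

theorem mul_bot (x : DR) : mul x bot = bot := by cases x <;> rfl

theorem add_comm' (x y : DR) : add x y = add y x := by
  cases x <;> cases y <;> (try rfl)
  simp only [add]
  split_ifs <;>
    first
      | rfl
      | (exfalso; linarith)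
      | (congr 1 <;> first | rfl | linarith)

theorem add_assoc' (x y z : DR) : add (add x y) z = add x (add y z) := by
  cases x with
  | bot => rw [bot_add, bot_add]
  | nb b r =>
    cases y with
    | bot => rw [add_bot, bot_add]
    | nb c s =>
      cases z with
      | bot => rw [add_bot, add_bot]
      | nb d t =>
        simp only [add]
        split_ifs <;>
          simp only [add] <;>
          (try split_ifs) <;>
          first
            | rfl
            | (exfalso; linarith)
            | (congr 1 <;> first | rfl | linarith)

theorem mul_comm' (x y : DR) : mul x y = mul y x := by
  cases x <;> cases y <;> (try rfl)
  simp [mul, Bool.or_comm, add_comm]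

theorem mul_assoc' (x y z : DR) : mul (mul x y) z = mul x (mul y z) := by
  cases x <;> cases y <;> cases z <;> (try rfl) <;>
    simp [mul, Bool.or_assoc, add_assoc]

theorem one_mul' (x : DR) : mul (nb false 0) x = x := by
  cases x <;> simp [mul]

theorem left_distrib' (x y z : DR) : mul x (add y z) = add (mul x y) (mul x z) := by
  cases x with
  | bot => simp [bot_mul, bot_add]
  | nb b r =>
    cases y with
    | bot => simp [bot_add, mul_bot]
    | nb c s =>
      cases z with
      | bot => simp [add_bot, mul_bot]
      | nb d t =>
        simp only [mul, add]
        split_ifs <;>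
          simp only [mul, add, Bool.or_true, Bool.true_or] <;>
          (try split_ifs) <;>
          first
            | rfl
            | (exfalso; linarith)
            | (congr 1 <;> first | rfl | linarith)

theorem right_distrib' (x y z : DR) : mul (add x y) z = add (mul x z) (mul y z) := by
  rw [mul_comm' (add x y) z, left_distrib', mul_comm' z x, mul_comm' z y]

instance : Add DR := ⟨add⟩
instance : Zero DR := ⟨bot⟩
instance : Mul DR := ⟨mul⟩
instance : One DR := ⟨nb false 0⟩

instance : AddCommMonoid DR where
  add := add
  add_assoc := add_assoc'
  zero := bot
  zero_add := bot_add
  add_zero := add_bot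
  add_comm := add_comm'
  nsmul := nsmulRec

instance : CommMonoid DR where
  mul := mul
  mul_assoc := mul_assoc'
  one := nb false 0
  one_mul := one_mul'
  mul_one := fun x => by show mul x (nb false 0) = x; rw [mul_comm']; exact one_mul' x
  mul_comm := mul_comm'
  npow := npowRec

instance : CommSemiring DR where
  __ := (inferInstance : AddCommMonoid DR)
  __ := (inferInstance : CommMonoid DR)
  left_distrib := left_distrib'
  right_distrib := right_distrib'
  zero_mul := bot_mul
  mul_zero := mul_bot

/-- The ghost ideal `G₀ = ℝ^ν ∪ {-∞}` as a predicate. -/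
def IsGhost : DR → Prop
  | bot => True
  | nb b _ => b = true

/-- The tangible elements `T = ℝ` as a predicate. -/
def Tangible : DR → Prop
  | nb false _ => True
  | _ => False

/-- Membership in `T ∪ {-∞}`. -/
def TangibleOrBot (x : DR) : Prop := x = bot ∨ Tangible x

/-- The underlying value in `ℝ ∪ {-∞}`. -/
def val : DR → WithBot ℝ
  | bot => ⊥
  | nb _ r => (r : WithBot ℝ)

/-- `x ≤_ν y` : comparison of underlying values, `-∞` smallest. -/
def nuLe (x y : DR) : Prop := val x ≤ val y

/-- `x <_ν y` : strict comparison of underlying values, `-∞` smallest. -/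
def nuLt (x y : DR) : Prop := val x < val y

/-- The tangible lift `x̂` of `x` (with `hat bot = bot`). -/
def hat : DR → DR
  | bot => bot
  | nb _ r => nb false r

/-- The ghost map `ν`. -/
def nu : DR → DR
  | bot => bot
  | nb _ r => nb true r

/-- The ghost-surpass relation `x ⊨ y` on `D(ℝ)`. -/
def GhostSurp (x y : DR) : Prop := ∃ c : DR, IsGhost c ∧ x = y + c

end DR

open DR

/-- A vector in `D(ℝ)^(n)` lies in the ghost submodule `G₀^(n)`. -/
def GhostVec {n : ℕ} (v : Fin n → DR) : Prop := ∀ j, IsGhost (v j)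

/-- A tangible vector: all entries in `T ∪ {-∞}`. -/
def TangibleVec {n : ℕ} (v : Fin n → DR) : Prop := ∀ j, TangibleOrBot (v j)

/-- The ghost-surpass relation `v ⊨ w` on vectors. -/
def GhostSurpVec {n : ℕ} (v w : Fin n → DR) : Prop :=
  ∃ u : Fin n → DR, GhostVec u ∧ v = w + u

/-- A family of vectors is tropically dependent. -/
def TropDep {ι : Type*} [Fintype ι] {n : ℕ} (w : ι → Fin n → DR) : Prop :=
  ∃ I : Finset ι, I.Nonempty ∧ ∃ α : ι → DR, (∀ i ∈ I, Tangible (α i)) ∧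
    ∀ j : Fin n, IsGhost (∑ i ∈ I, α i * w i j)

/-- A family of vectors is tropically independent. -/
def TropIndep {ι : Type*} [Fintype ι] {n : ℕ} (w : ι → Fin n → DR) : Prop := ¬ TropDep w

/-- A set of vectors is tropically dependent. -/
def SetTropDep {n : ℕ} (S : Set (Fin n → DR)) : Prop :=
  ∃ I : Finset (Fin n → DR), ↑I ⊆ S ∧ I.Nonempty ∧
    ∃ α : (Fin n → DR) → DR, (∀ w ∈ I, Tangible (α w)) ∧
      ∀ j : Fin n, IsGhost (∑ w ∈ I, α w * w j)

/-- A set of vectors is tropically independent. -/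
def SetTropIndep {n : ℕ} (S : Set (Fin n → DR)) : Prop := ¬ SetTropDep S

/-- A d-base of `V`: a maximal tropically independent subset of `V`. -/
def IsDBase {n : ℕ} (V S : Set (Fin n → DR)) : Prop :=
  S ⊆ V ∧ SetTropIndep S ∧ ∀ S', S ⊆ S' → S' ⊆ V → SetTropIndep S' → S' = S

/-- The rank of `V`: the maximal number of elements of a d-base of `V`. -/
noncomputable def trank {n : ℕ} (V : Set (Fin n → DR)) : ℕ :=
  sSup {m | ∃ S, IsDBase V S ∧ S.Finite ∧ S.ncard = m}

/-- `v` is tropically spanned by `S`. -/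
def SpannedBy {n : ℕ} (S : Set (Fin n → DR)) (v : Fin n → DR) : Prop :=
  ∃ I : Finset (Fin n → DR), ↑I ⊆ S ∧ I.Nonempty ∧
    ∃ α : (Fin n → DR) → DR, (∀ w ∈ I, Tangible (α w)) ∧
      GhostSurpVec v (fun j => ∑ w ∈ I, α w * w j)

/-- The tropical determinant (permanent) of a square matrix over `D(ℝ)`. -/
noncomputable def tperm {k : ℕ} (A : Matrix (Fin k) (Fin k) DR) : DR :=
  ∑ π : Equiv.Perm (Fin k), ∏ i, A (π i) i

/-- A quasi-identity matrix: nonsingular, multiplicatively idempotent, and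
ghost-surpassing the identity matrix entrywise. -/
def QuasiIdentity {n : ℕ} (Q : Matrix (Fin n) (Fin n) DR) : Prop :=
  Tangible (tperm Q) ∧ Q * Q = Q ∧ (∀ i, GhostSurp (Q i i) 1) ∧
    ∀ i j, i ≠ j → IsGhost (Q i j)

namespace DR

theorem isGhost_zero' : IsGhost (0 : DR) := trivial

theorem not_isGhost_one : ¬ IsGhost (1 : DR) := by
  show ¬ IsGhost (nb false 0)
  simp [IsGhost]

theorem tangible_not_ghost {x : DR} (h : Tangible x) : ¬ IsGhost x := by
  cases x with
  | bot => simp [Tangible] at h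
  | nb b r => cases b <;> simp [Tangible, IsGhost] at *

theorem isGhost_add' {x y : DR} (hx : IsGhost x) (hy : IsGhost y) : IsGhost (x + y) := by
  show IsGhost (add x y)
  cases x with
  | bot => rw [bot_add]; exact hy
  | nb b r =>
    cases y with
    | bot => rw [add_bot]; exact hx
    | nb c s =>
      simp only [IsGhost] at *
      simp only [add]
      split_ifs <;> simp [IsGhost, hx, hy]

theorem isGhost_mul' {x : DR} (y : DR) (hx : IsGhost x) : IsGhost (x * y) := by
  show IsGhost (mul x y)
  cases x with
  | bot => rw [bot_mul]; trivial
  | nb b r =>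
    cases y with
    | bot => rw [mul_bot]; trivial
    | nb c s =>
      simp only [IsGhost] at hx
      subst hx
      simp [mul, IsGhost]

theorem isGhost_sum {ι : Type*} (s : Finset ι) (f : ι → DR)
    (h : ∀ i ∈ s, IsGhost (f i)) : IsGhost (∑ i ∈ s, f i) :=
  Finset.sum_induction f IsGhost (fun _ _ ha hb => isGhost_add' ha hb) isGhost_zero' h

theorem isGhost_prod {ι : Type*} {s : Finset ι} {f : ι → DR} {j : ι}
    (hj : j ∈ s) (h : IsGhost (f j)) : IsGhost (∏ i ∈ s, f i) := by
  classical
  rw [← Finset.mul_prod_erase _ _ hj]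
  exact isGhost_mul' _ h

theorem val_zero' : val (0 : DR) = ⊥ := rfl

theorem val_one' : val (1 : DR) = (0 : WithBot ℝ) := rfl

theorem val_add' (x y : DR) : val (x + y) = max (val x) (val y) := by
  show val (add x y) = max (val x) (val y)
  cases x with
  | bot => rw [bot_add]; simp [val]
  | nb b r =>
    cases y with
    | bot => rw [add_bot]; simp [val]
    | nb c s =>
      simp only [add, val]
      split_ifs with h1 h2
      · rw [max_eq_right]; exact_mod_cast h1.le
      · rw [max_eq_left]; exact_mod_cast h2.le
      · have : r = s := le_antisymm (not_lt.1 h2) (not_lt.1 h1)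
        subst this; simp

theorem val_mul' (x y : DR) : val (x * y) = val x + val y := by
  show val (mul x y) = val x + val y
  cases x with
  | bot => rw [bot_mul]; simp [val]
  | nb b r =>
    cases y with
    | bot => rw [mul_bot]; simp [val]
    | nb c s => simp [mul, val]

theorem val_le_sum {ι : Type*} {s : Finset ι} (f : ι → DR) {j : ι} (hj : j ∈ s) :
    val (f j) ≤ val (∑ i ∈ s, f i) := by
  classical
  induction s using Finset.induction_on with
  | empty => simp at hj
  | @insert _ _ hja ih =>
    rw [Finset.sum_insert hja, val_add']
    rcases Finset.mem_insert.1 hj with h | h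
    · subst h; exact le_max_left _ _
    · exact le_trans (ih h) (le_max_right _ _)

theorem exists_le_of_le_val_sum {ι : Type*} {s : Finset ι} (f : ι → DR)
    {c : WithBot ℝ} (hc : ⊥ < c) (h : c ≤ val (∑ i ∈ s, f i)) :
    ∃ j ∈ s, c ≤ val (f j) := by
  classical
  induction s using Finset.induction_on with
  | empty =>
    exfalso
    rw [show (∑ i ∈ (∅ : Finset ι), f i) = 0 from rfl, val_zero'] at h
    exact absurd (lt_of_lt_of_le hc h) (lt_irrefl _)
  | @insert _ _ hja ih =>
    rw [Finset.sum_insert hja, val_add', le_max_iff] at h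
    rcases h with h | h
    · exact ⟨_, Finset.mem_insert_self _ _, h⟩
    · obtain ⟨j, hj, hjc⟩ := ih h
      exact ⟨j, Finset.mem_insert_of_mem hj, hjc⟩

theorem lt_val_of_ghost_add {x y : DR} (hx : IsGhost x) (h : ¬ IsGhost (x + y)) :
    val x < val (x + y) := by
  rw [show x + y = add x y from rfl] at h ⊢
  revert h
  cases x with
  | bot =>
    rw [bot_add]
    intro h
    cases y with
    | bot => exact absurd trivial h
    | nb c s => exact WithBot.bot_lt_coe s
  | nb b r =>
    simp only [IsGhost] at hx; subst hx
    cases y with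
    | bot => rw [add_bot]; intro h; exact absurd rfl h
    | nb c s =>
      simp only [add]
      split_ifs with h1 h2
      · intro _; simpa [val] using h1
      · intro h; exact absurd rfl h
      · intro h; exact absurd rfl h

theorem le_val_of_not_ghost_add_ghost {x y : DR} (hx : ¬ IsGhost x) (h : IsGhost (x + y)) :
    val x ≤ val y := by
  rw [show x + y = add x y from rfl] at h
  revert h
  cases x with
  | bot => intro _; exact bot_le
  | nb b r =>
    cases b
    · cases y with
      | bot => rw [add_bot]; intro h; exact absurd h hx
      | nb c s =>
        simp only [add]
        split_ifs with h1 h2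
        · intro _; simpa [val] using h1.le
        · intro h; simp [IsGhost] at h
        · intro _
          have : r = s := le_antisymm (not_lt.1 h2) (not_lt.1 h1)
          simp [val, this]
    · exact absurd rfl hx

theorem quasi_diag_one {n : ℕ} {Q : Matrix (Fin n) (Fin n) DR}
    (hQ : QuasiIdentity Q) (i : Fin n) : Q i i = 1 := by
  have hng : ¬ IsGhost (Q i i) := by
    intro hg
    apply tangible_not_ghost hQ.1
    apply isGhost_sum
    intro π _
    apply isGhost_prod (Finset.mem_univ i)
    by_cases h : π i = i
    · rw [h]; exact hg
    · exact hQ.2.2.2 _ _ h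
  obtain ⟨c, hc, hqc⟩ := hQ.2.2.1 i
  cases c with
  | bot => rw [hqc]; exact add_bot _
  | nb b r =>
    cases b
    · simp [IsGhost] at hc
    · have key : (1 : DR) + nb true r = add (nb false 0) (nb true r) := rfl
      rw [key] at hqc
      simp only [add] at hqc
      split_ifs at hqc with h1 h2
      · rw [hqc] at hng; exact absurd rfl hng
      · exact hqc
      · rw [hqc] at hng; exact absurd rfl hng

theorem quasi_tri {n : ℕ} {Q : Matrix (Fin n) (Fin n) DR}
    (hQ : QuasiIdentity Q) (i j k : Fin n) :
    val (Q i j) + val (Q j k) ≤ val (Q i k) := by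
  have h := congrFun (congrFun hQ.2.1 i) k
  rw [Matrix.mul_apply] at h
  calc val (Q i j) + val (Q j k) = val (Q i j * Q j k) := (val_mul' _ _).symm
    _ ≤ val (∑ m, Q i m * Q m k) := val_le_sum (fun m => Q i m * Q m k) (Finset.mem_univ j)
    _ = val (Q i k) := by rw [h]

theorem quasi_two {n : ℕ} {Q : Matrix (Fin n) (Fin n) DR}
    (hQ : QuasiIdentity Q) {i k : Fin n} (hik : i ≠ k) :
    val (Q i k) + val (Q k i) < 0 := by
  have h := congrFun (congrFun hQ.2.1 i) i
  rw [Matrix.mul_apply, quasi_diag_one hQ i,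
    ← Finset.add_sum_erase _ _ (Finset.mem_univ k)] at h
  have hg : IsGhost (Q i k * Q k i) := isGhost_mul' _ (hQ.2.2.2 _ _ hik)
  have hng : ¬ IsGhost (Q i k * Q k i + ∑ m ∈ Finset.univ.erase k, Q i m * Q m i) := by
    rw [h]; exact not_isGhost_one
  have := lt_val_of_ghost_add hg hng
  rw [h, val_one', val_mul'] at this
  exact this

end DR
namespace DR

theorem exists_big {n : ℕ} {P Q : Matrix (Fin n) (Fin n) DR}
    (hP : QuasiIdentity P) (hQ : QuasiIdentity Q) (i : Fin n)
    (hg : IsGhost ((P * Q) i i)) :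
    ∃ k, k ≠ i ∧ (0 : WithBot ℝ) ≤ val (P i k) + val (Q k i) := by
  rw [Matrix.mul_apply,
    ← Finset.add_sum_erase _ _ (Finset.mem_univ i),
    quasi_diag_one hP i, quasi_diag_one hQ i, one_mul] at hg
  have h0 : (0 : WithBot ℝ) ≤ val (∑ k ∈ Finset.univ.erase i, P i k * Q k i) := by
    have h := le_val_of_not_ghost_add_ghost not_isGhost_one hg
    rwa [val_one'] at h
  obtain ⟨k, hk, hk0⟩ := exists_le_of_le_val_sum (fun k => P i k * Q k i)
    (by exact (WithBot.bot_lt_coe (0 : ℝ))) h0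
  refine ⟨k, Finset.ne_of_mem_erase hk, ?_⟩
  rwa [val_mul'] at hk0

end DR

/-- The diagonal of the product of two quasi-identity matrices over `D(ℝ)`
cannot consist entirely of ghosts. -/
theorem diag_of_product_of_quasi_identities_not_all_ghost (n : ℕ) (hn : 0 < n)
    (P Q : Matrix (Fin n) (Fin n) DR) (hP : QuasiIdentity P) (hQ : QuasiIdentity Q) :
    ∃ i, ¬ IsGhost ((P * Q) i i) := by
  by_contra hcon
  push_neg at hcon

  -- the weight function
  set C : Fin n → Fin n → WithBot ℝ := fun i k => val (P i k) + val (Q k i) with hCdef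
  have htri : ∀ i j k, C i j + C j k ≤ C i k := by
    intro i j k
    have h1 := quasi_tri hP i j k
    have h2 := quasi_tri hQ k j i
    calc C i j + C j k
        = (val (P i j) + val (Q j i)) + (val (P j k) + val (Q k j)) := rfl
      _ = (val (P i j) + val (P j k)) + (val (Q k j) + val (Q j i)) := by
          rw [add_add_add_comm, add_comm (val (Q j i))]
      _ ≤ val (P i k) + val (Q k i) := add_le_add h1 h2
      _ = C i k := rfl
  have hneg : ∀ i k, i ≠ k → C i k + C k i < 0 := by
    intro i k hik
    have h1 := quasi_two hP hik
    have h2 := quasi_two hQ (Ne.symm hik)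
    calc C i k + C k i
        = (val (P i k) + val (Q k i)) + (val (P k i) + val (Q i k)) := rfl
      _ = (val (P i k) + val (P k i)) + (val (Q k i) + val (Q i k)) := by
          rw [add_add_add_comm]
      _ ≤ (val (P i k) + val (P k i)) + 0 := add_le_add_right h2.le _
      _ = val (P i k) + val (P k i) := add_zero _
      _ < 0 := h1
  have hf : ∀ i, ∃ k, k ≠ i ∧ (0 : WithBot ℝ) ≤ C i k := fun i =>
    DR.exists_big hP hQ i (hcon i)
  choose f hf1 hf2 using hf
  -- chain inequality along iterates of f
  have chain : ∀ m : ℕ, ∀ j : Fin n,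
      ∑ t ∈ Finset.range (m + 1), C (f^[t] j) (f^[t + 1] j) ≤ C j (f^[m + 1] j) := by
    intro m
    induction m with
    | zero => intro j; simp
    | succ m ih =>
      intro j
      rw [Finset.sum_range_succ]
      calc (∑ t ∈ Finset.range (m + 1), C (f^[t] j) (f^[t + 1] j))
            + C (f^[m + 1] j) (f^[m + 2] j)
          ≤ C j (f^[m + 1] j) + C (f^[m + 1] j) (f^[m + 2] j) :=
            add_le_add_left (ih j) _
        _ ≤ C j (f^[m + 2] j) := htri _ _ _
  -- find a cycle
  have j0 : Fin n := ⟨0, hn⟩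
  have hginj : ∃ a b : ℕ, a ≠ b ∧ f^[a] j0 = f^[b] j0 := by
    have := Finite.exists_ne_map_eq_of_infinite (fun m : ℕ => f^[m] j0)
    obtain ⟨a, b, hab, h⟩ := this
    exact ⟨a, b, hab, h⟩
  obtain ⟨a, b, hab, hab2⟩ := hginj
  -- wlog a < b
  have hexists : ∃ m : ℕ, 0 < m ∧ f^[m] (f^[min a b] j0) = f^[min a b] j0 := by
    rcases hab.lt_or_gt with h | h
    · refine ⟨b - a, Nat.sub_pos_of_lt h, ?_⟩
      rw [min_eq_left h.le, ← Function.iterate_add_apply, Nat.sub_add_cancel h.le]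
      exact hab2.symm
    · refine ⟨a - b, Nat.sub_pos_of_lt h, ?_⟩
      rw [min_eq_right h.le, ← Function.iterate_add_apply, Nat.sub_add_cancel h.le]
      exact hab2
  set j : Fin n := f^[min a b] j0 with hjdef
  classical
  set m := Nat.find hexists with hmdef
  have hm : 0 < m ∧ f^[m] j = j := by rw [hmdef]; exact Nat.find_spec hexists
  have hm1 : m ≠ 1 := by
    intro h
    rw [h] at hm
    exact hf1 j (by simpa using hm.2)
  have hm2 : 2 ≤ m := by
    have h0 := hm.1
    omega
  obtain ⟨k, hk⟩ : ∃ k, m = k + 2 := ⟨m - 2, by omega⟩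
  -- the cycle sum is nonnegative
  have hsum_nonneg : (0 : WithBot ℝ) ≤ ∑ t ∈ Finset.range m, C (f^[t] j) (f^[t + 1] j) := by
    apply Finset.sum_nonneg
    intro t _
    rw [Function.iterate_succ_apply']
    exact hf2 _
  -- but the cycle sum is negative
  have hmid : f^[k + 1] j ≠ j := by
    intro h
    have : 0 < k + 1 ∧ f^[k + 1] j = j := ⟨Nat.succ_pos _, h⟩
    exact absurd this (Nat.find_min hexists (by omega))
  have hsum_neg : ∑ t ∈ Finset.range m, C (f^[t] j) (f^[t + 1] j) < 0 := by
    rw [hk, Finset.sum_range_succ]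
    have hlast : f^[k + 1 + 1] j = j := by rw [← hk]; exact hm.2
    calc (∑ t ∈ Finset.range (k + 1), C (f^[t] j) (f^[t + 1] j))
          + C (f^[k + 1] j) (f^[k + 1 + 1] j)
        ≤ C j (f^[k + 1] j) + C (f^[k + 1] j) (f^[k + 1 + 1] j) :=
          add_le_add_left (chain k j) _
      _ = C j (f^[k + 1] j) + C (f^[k + 1] j) j := by rw [hlast]
      _ < 0 := hneg _ _ (Ne.symm hmid)
  exact absurd (lt_of_le_of_lt hsum_nonneg hsum_neg) (lt_irrefl _)
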